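/- Let x_1,...,x_n be a median ordering of a tournament and suppose x_i → x_{i-2} is an edge (for some 3 ≤ i ≤ n). Then the orderings obtained by cyclically rotating the consecutive triple x_{i-2}, x_{i-1}, x_i (i.e., x_1,...,x_{i-3}, x_{i-1}, x_i, x_{i-2}, x_{i+1},...,x_n and x_1,...,x_{i-3}, x_i, x_{i-2}, x_{i-1}, x_{i+1},...,x_n) are also median orderings. -/

import Mathlib

/-- A tournament: irreflexive, and exactly one direction between distinct vertices. -/
def IsTournament {V : Type*} (T : V → V → Prop) : Prop :=
  (∀ v : V, ¬ T v v) ∧ ∀ u v : V, u ≠ v → (T u v ↔ ¬ T v u)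

/-- `T` contains the k-th power of a directed path on `L` vertices. -/
def ContainsPathPower {V : Type*} (T : V → V → Prop) (k L : ℕ) : Prop :=
  ∃ v : Fin L → V, Function.Injective v ∧
    ∀ i j : Fin L, (i : ℕ) < (j : ℕ) → (j : ℕ) ≤ (i : ℕ) + k → T (v i) (v j)
/-- Number of forward edges of the ordering `x 0, x 1, ..., x (n-1)`. -/
def fwdCount {n : ℕ} (T : Fin n → Fin n → Prop) [DecidableRel T]
    (x : Equiv.Perm (Fin n)) : ℕ :=
  (Finset.univ.filter fun p : Fin n × Fin n => p.1 < p.2 ∧ T (x p.1) (x p.2)).card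

/-- A median ordering maximizes the number of forward edges. -/
def IsMedianOrdering {n : ℕ} (T : Fin n → Fin n → Prop) [DecidableRel T]
    (x : Equiv.Perm (Fin n)) : Prop :=
  ∀ y : Equiv.Perm (Fin n), fwdCount T y ≤ fwdCount T x

open Finset in
lemma fwd_helper {n : ℕ} (T : Fin n → Fin n → Prop) [DecidableRel T]
    (x σ : Equiv.Perm (Fin n)) (S : Finset (Fin n))
    (hfix : ∀ p, p ∉ S → σ p = p)
    (hint : ∀ p q r : Fin n, p ∈ S → r ∈ S → p ≤ q → q ≤ r → q ∈ S) :
    fwdCount T (σ.trans x) +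
      ((S ×ˢ S).filter (fun p => p.1 < p.2 ∧ T (x p.1) (x p.2))).card =
    fwdCount T x +
      ((S ×ˢ S).filter (fun p => p.1 < p.2 ∧ T (x (σ p.1)) (x (σ p.2)))).card := by
  have key : ∀ τ : Equiv.Perm (Fin n), (∀ p, p ∉ S → τ p = p) →
      (∀ p : Fin n, τ p ∈ S ↔ p ∈ S) ∧
      (∀ p q : Fin n, p < q → ¬(p ∈ S ∧ q ∈ S) → τ p < τ q) := by
    intro τ hf
    have hmem : ∀ p : Fin n, τ p ∈ S ↔ p ∈ S := by
      intro p
      constructor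
      · intro h; by_contra hp; rw [hf p hp] at h; exact hp h
      · intro h; by_contra hs
        have h2 : τ (τ p) = τ p := hf _ hs
        have h3 : τ p = p := τ.injective h2
        rw [h3] at hs; exact hs h
    refine ⟨hmem, ?_⟩
    intro p q hpq hns
    by_cases hp : p ∈ S
    · have hq : q ∉ S := fun hq => hns ⟨hp, hq⟩
      rw [hf q hq]
      by_contra h
      push_neg at h
      exact hq (hint p q (τ p) hp ((hmem p).mpr hp) hpq.le h)
    · rw [hf p hp]
      by_cases hq : q ∈ S
      · by_contra h
        push_neg at h
        exact hp (hint (τ q) p q ((hmem q).mpr hq) hq h hpq.le)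
      · rw [hf q hq]; exact hpq
  have hfix' : ∀ p, p ∉ S → σ⁻¹ p = p := by
    intro p hp
    have := hfix p hp
    exact (Equiv.Perm.inv_eq_iff_eq).mpr (hfix p hp).symm
  obtain ⟨hmem, hord⟩ := key σ hfix
  obtain ⟨hmem', hord'⟩ := key σ⁻¹ hfix'
  have split : ∀ z : Equiv.Perm (Fin n),
      fwdCount T z =
        ((S ×ˢ S).filter (fun p => p.1 < p.2 ∧ T (z p.1) (z p.2))).card +
        (univ.filter (fun p : Fin n × Fin n =>
          (p.1 < p.2 ∧ T (z p.1) (z p.2)) ∧ ¬(p.1 ∈ S ∧ p.2 ∈ S))).card := by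
    intro z
    unfold fwdCount
    rw [← Finset.card_filter_add_card_filter_not
      (p := fun p : Fin n × Fin n => p.1 ∈ S ∧ p.2 ∈ S)]
    congr 1
    · congr 1
      ext p
      simp [Finset.mem_filter, Finset.mem_product]
      tauto
    · rw [Finset.filter_filter]
  rw [split (σ.trans x), split x]
  simp only [Equiv.trans_apply]
  have hout :
      (univ.filter (fun p : Fin n × Fin n =>
        (p.1 < p.2 ∧ T (x (σ p.1)) (x (σ p.2))) ∧ ¬(p.1 ∈ S ∧ p.2 ∈ S))).card =
      (univ.filter (fun p : Fin n × Fin n =>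
        (p.1 < p.2 ∧ T (x p.1) (x p.2)) ∧ ¬(p.1 ∈ S ∧ p.2 ∈ S))).card := by
    apply Finset.card_bij' (fun p _ => (σ p.1, σ p.2)) (fun p _ => (σ⁻¹ p.1, σ⁻¹ p.2))
    · rintro ⟨p, q⟩ hpq
      simp only [Finset.mem_filter, Finset.mem_univ, true_and] at hpq ⊢
      obtain ⟨⟨hlt, hTpq⟩, hns⟩ := hpq
      refine ⟨⟨hord p q hlt hns, hTpq⟩, ?_⟩
      rw [hmem, hmem]; exact hns
    · rintro ⟨p, q⟩ hpq
      simp only [Finset.mem_filter, Finset.mem_univ, true_and] at hpq ⊢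
      obtain ⟨⟨hlt, hTpq⟩, hns⟩ := hpq
      refine ⟨⟨hord' p q hlt hns, ?_⟩, ?_⟩
      · simpa using hTpq
      · rw [hmem', hmem']; exact hns
    · rintro ⟨p, q⟩ _; simp
    · rintro ⟨p, q⟩ _; simp
  erw [hout]
  rw [add_assoc, add_comm]
  exact congrArg (· + _) (add_comm _ _)

open Finset in
theorem median_rotation {n : ℕ} (T : Fin n → Fin n → Prop) [DecidableRel T]
    (hT : IsTournament T) (x : Equiv.Perm (Fin n)) (hx : IsMedianOrdering T x)
    (a : ℕ) (ha : a + 2 < n)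
    (hedge : T (x ⟨a + 2, ha⟩) (x ⟨a, by omega⟩)) :
    IsMedianOrdering T (((Equiv.swap (⟨a + 1, by omega⟩ : Fin n) ⟨a + 2, ha⟩).trans
        (Equiv.swap (⟨a, by omega⟩ : Fin n) ⟨a + 1, by omega⟩)).trans x) ∧
    IsMedianOrdering T (((Equiv.swap (⟨a, by omega⟩ : Fin n) ⟨a + 1, by omega⟩).trans
        (Equiv.swap (⟨a + 1, by omega⟩ : Fin n) ⟨a + 2, ha⟩)).trans x) := by
  set A : Fin n := ⟨a, by omega⟩ with hA
  set B : Fin n := ⟨a + 1, by omega⟩ with hB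
  set C : Fin n := ⟨a + 2, ha⟩ with hC
  have hAB : A ≠ B := by simp [hA, hB, Fin.ext_iff]
  have hAC : A ≠ C := by simp [hA, hC, Fin.ext_iff]
  have hBC : B ≠ C := by simp [hB, hC, Fin.ext_iff]
  set S : Finset (Fin n) := {A, B, C} with hS
  have hint : ∀ p q r : Fin n, p ∈ S → r ∈ S → p ≤ q → q ≤ r → q ∈ S := by
    intro p q r hp hr hpq hqr
    simp only [hS, Finset.mem_insert, Finset.mem_singleton, Fin.ext_iff, hA, hB, hC] at *
    rw [Fin.le_def] at hpq hqr
    omega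
  -- the two rotations
  set σ₁ : Equiv.Perm (Fin n) := (Equiv.swap B C).trans (Equiv.swap A B) with hσ₁
  set σ₂ : Equiv.Perm (Fin n) := (Equiv.swap A B).trans (Equiv.swap B C) with hσ₂
  have hfix₁ : ∀ p, p ∉ S → σ₁ p = p := by
    intro p hp
    simp only [hS, Finset.mem_insert, Finset.mem_singleton, not_or] at hp
    simp [hσ₁, Equiv.swap_apply_of_ne_of_ne, hp.1, hp.2.1, hp.2.2]
  have hfix₂ : ∀ p, p ∉ S → σ₂ p = p := by
    intro p hp
    simp only [hS, Finset.mem_insert, Finset.mem_singleton, not_or] at hp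
    simp [hσ₂, Equiv.swap_apply_of_ne_of_ne, hp.1, hp.2.1, hp.2.2]
  have hσ₁A : σ₁ A = B := by
    rw [hσ₁, Equiv.trans_apply, Equiv.swap_apply_of_ne_of_ne hAB hAC,
      Equiv.swap_apply_left]
  have hσ₁B : σ₁ B = C := by
    rw [hσ₁, Equiv.trans_apply, Equiv.swap_apply_left,
      Equiv.swap_apply_of_ne_of_ne hAC.symm hBC.symm]
  have hσ₁C : σ₁ C = A := by
    rw [hσ₁, Equiv.trans_apply, Equiv.swap_apply_right, Equiv.swap_apply_right]
  have hσ₂A : σ₂ A = C := by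
    rw [hσ₂, Equiv.trans_apply, Equiv.swap_apply_left, Equiv.swap_apply_left]
  have hσ₂B : σ₂ B = A := by
    rw [hσ₂, Equiv.trans_apply, Equiv.swap_apply_right,
      Equiv.swap_apply_of_ne_of_ne hAB hAC]
  have hσ₂C : σ₂ C = B := by
    rw [hσ₂, Equiv.trans_apply, Equiv.swap_apply_of_ne_of_ne hAC.symm hBC.symm,
      Equiv.swap_apply_right]
  -- card of the in-part
  have triple : ∀ z : Fin n → Fin n,
      ((S ×ˢ S).filter (fun p => p.1 < p.2 ∧ T (z p.1) (z p.2))).card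
        = (if T (z A) (z B) then 1 else 0) + (if T (z A) (z C) then 1 else 0)
          + (if T (z B) (z C) then 1 else 0) := by
    intro z
    have hset : (S ×ˢ S).filter (fun p => p.1 < p.2 ∧ T (z p.1) (z p.2))
        = ({(A, B), (A, C), (B, C)} : Finset (Fin n × Fin n)).filter
            (fun p => T (z p.1) (z p.2)) := by
      ext ⟨p, q⟩
      simp only [Finset.mem_filter, Finset.mem_product, hS, Finset.mem_insert,
        Finset.mem_singleton, Prod.mk.injEq]
      constructor
      · rintro ⟨⟨hp, hq⟩, hlt, hQ⟩
        refine ⟨?_, hQ⟩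
        rw [Fin.lt_def] at hlt
        simp only [Fin.ext_iff, hA, hB, hC] at hp hq ⊢
        omega
      · rintro ⟨h, hQ⟩
        have hlt : p < q ∧ ((p = A ∨ p = B ∨ p = C) ∧ (q = A ∨ q = B ∨ q = C)) := by
          rw [Fin.lt_def]
          simp only [Fin.ext_iff, hA, hB, hC] at h ⊢
          omega
        exact ⟨hlt.2, hlt.1, hQ⟩
    rw [hset, Finset.card_filter]
    rw [Finset.sum_insert (by simp [Prod.ext_iff, hBC, hAB]),
        Finset.sum_insert (by simp [Prod.ext_iff, hAB, hAC]),
        Finset.sum_singleton]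
    ring
  have h1 := fwd_helper T x σ₁ S hfix₁ hint
  have h2 := fwd_helper T x σ₂ S hfix₂ hint
  rw [triple x, triple (fun p => x (σ₁ p))] at h1
  rw [triple x, triple (fun p => x (σ₂ p))] at h2
  simp only [hσ₁A, hσ₁B, hσ₁C, hσ₂A, hσ₂B, hσ₂C] at h1 h2
  -- tournament facts
  have huv : x A ≠ x B := fun h => hAB (x.injective h)
  have hvw : x B ≠ x C := fun h => hBC (x.injective h)
  have huw : x A ≠ x C := fun h => hAC (x.injective h)
  have hnuw : ¬ T (x A) (x C) := ((hT.2 _ _ huw.symm).mp hedge)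
  have hvu : T (x B) (x A) ↔ ¬ T (x A) (x B) := by
    rw [hT.2 _ _ huv.symm]
  have hwv : T (x C) (x B) ↔ ¬ T (x B) (x C) := by
    rw [hT.2 _ _ hvw.symm]
  constructor
  · intro y
    refine le_trans (hx y) ?_
    by_cases h : T (x A) (x B) <;>
      simp [h, hedge, hnuw, hvu, hwv] at h1 <;> omega
  · intro y
    refine le_trans (hx y) ?_
    by_cases h : T (x B) (x C) <;>
      simp [h, hedge, hnuw, hvu, hwv] at h2 <;> omega
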